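/- arXiv:1512.00105 — 3 statements merged into one kernel-verified Lean document; each statement's English description precedes it below -/
import Mathlib

section
/- Let F(r) = (1/C)(r² - r⁴/21 + 4r⁶/315 + r⁸/945 + 74 r^{10}/429925) with C chosen so F(π/2) = 1. Then for all r ∈ (0, π/2]: 1/C ≤ F(r)/sin²r ≤ 1, and F(r)/sin²r is monotone nondecreasing on (0, π/2]. -/
open Real

/-- The unnormalized polynomial `r² - r⁴/21 + 4r⁶/315 + r⁸/945 + 74 r¹⁰/429925`. -/
noncomputable def Fpre (r : ℝ) : ℝ :=
  r ^ 2 - r ^ 4 / 21 + 4 * r ^ 6 / 315 + r ^ 8 / 945 + 74 * r ^ 10 / 429925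

/-- The normalizing constant `C`, chosen so that `F(π/2) = 1`. -/
noncomputable def Cc : ℝ := Fpre (π / 2)

/-- The normalized polynomial `F = Fpre / C`. -/
noncomputable def Ff (r : ℝ) : ℝ := Fpre r / Cc

/- ### Auxiliary lemmas -/

/-- Nonnegativity from a derivative bound on `[0, ∞)`. -/
lemma aux_nonneg_of_deriv (f f' : ℝ → ℝ) (hder : ∀ x, HasDerivAt f (f' x) x)
    (h0 : f 0 = 0) (hd : ∀ x, 0 ≤ x → 0 ≤ f' x) : ∀ x, 0 ≤ x → 0 ≤ f x := by
  have hmono : MonotoneOn f (Set.Ici 0) := by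
    apply monotoneOn_of_deriv_nonneg (convex_Ici 0)
    · exact fun x _ => (hder x).continuousAt.continuousWithinAt
    · exact fun x _ => (hder x).differentiableAt.differentiableWithinAt
    · intro x hx
      rw [(hder x).deriv]
      rw [interior_Ici] at hx
      exact hd x (le_of_lt hx)
  intro x hx
  have := hmono (Set.self_mem_Ici) hx hx
  linarith [h0 ▸ this]

lemma aux_sin_ge_1 (x : ℝ) (hx : 0 ≤ x) : x - x ^ 3 / 6 ≤ Real.sin x := by
  have := aux_nonneg_of_deriv (fun x => Real.sin x - x + x ^ 3 / 6)
    (fun x => Real.cos x - 1 + x ^ 2 / 2)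
    (fun x => by
      have h := ((Real.hasDerivAt_sin x).sub (hasDerivAt_id x)).add
        ((hasDerivAt_pow 3 x).div_const 6)
      exact h.congr_deriv (by ring))
    (by norm_num)
    (fun x _ => by nlinarith [Real.one_sub_sq_div_two_le_cos (x := x)])
    x hx
  linarith

lemma aux_cos_le_1 (x : ℝ) (hx : 0 ≤ x) : Real.cos x ≤ 1 - x ^ 2 / 2 + x ^ 4 / 24 := by
  have := aux_nonneg_of_deriv (fun x => 1 - x ^ 2 / 2 + x ^ 4 / 24 - Real.cos x)
    (fun x => -x + x ^ 3 / 6 + Real.sin x)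
    (fun x => by
      have h := ((((hasDerivAt_const x (1:ℝ)).sub ((hasDerivAt_pow 2 x).div_const 2)).add
        ((hasDerivAt_pow 4 x).div_const 24)).sub (Real.hasDerivAt_cos x))
      exact h.congr_deriv (by ring))
    (by norm_num)
    (fun x hx => by nlinarith [aux_sin_ge_1 x hx])
    x hx
  linarith

lemma aux_sin_le_2 (x : ℝ) (hx : 0 ≤ x) : Real.sin x ≤ x - x ^ 3 / 6 + x ^ 5 / 120 := by
  have := aux_nonneg_of_deriv (fun x => x - x ^ 3 / 6 + x ^ 5 / 120 - Real.sin x)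
    (fun x => 1 - x ^ 2 / 2 + x ^ 4 / 24 - Real.cos x)
    (fun x => by
      have h := (((hasDerivAt_id x).sub ((hasDerivAt_pow 3 x).div_const 6)).add
        ((hasDerivAt_pow 5 x).div_const 120)).sub (Real.hasDerivAt_sin x)
      exact h.congr_deriv (by ring))
    (by norm_num)
    (fun x hx => by nlinarith [aux_cos_le_1 x hx])
    x hx
  linarith

lemma aux_cos_ge_2 (x : ℝ) (hx : 0 ≤ x) :
    1 - x ^ 2 / 2 + x ^ 4 / 24 - x ^ 6 / 720 ≤ Real.cos x := by
  have := aux_nonneg_of_deriv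
    (fun x => Real.cos x - (1 - x ^ 2 / 2 + x ^ 4 / 24 - x ^ 6 / 720))
    (fun x => -Real.sin x + x - x ^ 3 / 6 + x ^ 5 / 120)
    (fun x => by
      have h := (Real.hasDerivAt_cos x).sub
        ((((hasDerivAt_const x (1:ℝ)).sub ((hasDerivAt_pow 2 x).div_const 2)).add
          ((hasDerivAt_pow 4 x).div_const 24)).sub ((hasDerivAt_pow 6 x).div_const 720))
      exact h.congr_deriv (by ring))
    (by norm_num)
    (fun x hx => by nlinarith [aux_sin_le_2 x hx])
    x hx
  linarith

lemma aux_sin_ge_3 (x : ℝ) (hx : 0 ≤ x) :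
    x - x ^ 3 / 6 + x ^ 5 / 120 - x ^ 7 / 5040 ≤ Real.sin x := by
  have := aux_nonneg_of_deriv
    (fun x => Real.sin x - (x - x ^ 3 / 6 + x ^ 5 / 120 - x ^ 7 / 5040))
    (fun x => Real.cos x - (1 - x ^ 2 / 2 + x ^ 4 / 24 - x ^ 6 / 720))
    (fun x => by
      have h := (Real.hasDerivAt_sin x).sub
        ((((hasDerivAt_id x).sub ((hasDerivAt_pow 3 x).div_const 6)).add
          ((hasDerivAt_pow 5 x).div_const 120)).sub ((hasDerivAt_pow 7 x).div_const 5040))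
      exact h.congr_deriv (by ring))
    (by norm_num)
    (fun x hx => by nlinarith [aux_cos_ge_2 x hx])
    x hx
  linarith

lemma aux_cos_le_3 (x : ℝ) (hx : 0 ≤ x) :
    Real.cos x ≤ 1 - x ^ 2 / 2 + x ^ 4 / 24 - x ^ 6 / 720 + x ^ 8 / 40320 := by
  have := aux_nonneg_of_deriv
    (fun x => 1 - x ^ 2 / 2 + x ^ 4 / 24 - x ^ 6 / 720 + x ^ 8 / 40320 - Real.cos x)
    (fun x => -x + x ^ 3 / 6 - x ^ 5 / 120 + x ^ 7 / 5040 + Real.sin x)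
    (fun x => by
      have h := ((((((hasDerivAt_const x (1:ℝ)).sub ((hasDerivAt_pow 2 x).div_const 2)).add
        ((hasDerivAt_pow 4 x).div_const 24)).sub ((hasDerivAt_pow 6 x).div_const 720)).add
        ((hasDerivAt_pow 8 x).div_const 40320)).sub (Real.hasDerivAt_cos x))
      exact h.congr_deriv (by ring))
    (by norm_num)
    (fun x hx => by nlinarith [aux_sin_ge_3 x hx])
    x hx
  linarith

/-- `π/2` squared is at most `5/2`. -/
lemma aux_pi_half_sq : (π / 2) ^ 2 ≤ 5 / 2 := by
  have h := Real.pi_lt_d2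
  nlinarith [Real.pi_pos]

/-- Key polynomial inequality 1: `Fpre' · s4 − 2 Fpre · c5 ≥ 0`. -/
lemma aux_key1 (r : ℝ) (h0 : 0 ≤ r) (h2 : r ^ 2 ≤ 5 / 2) :
    2 * Fpre r * (1 - r ^ 2 / 2 + r ^ 4 / 24 - r ^ 6 / 720 + r ^ 8 / 40320) ≤
      (2 * r - 4 * r ^ 3 / 21 + 24 * r ^ 5 / 315 + 8 * r ^ 7 / 945 + 740 * r ^ 9 / 429925) *
        (r - r ^ 3 / 6 + r ^ 5 / 120 - r ^ 7 / 5040) := by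
  have hu : 0 ≤ r ^ 2 := sq_nonneg r
  have hQ : 0 ≤ 4 / 7 - 2 / 63 * r ^ 2 + 1 / 90 * (r ^ 2) ^ 2
      + 49895401 / 109207828800 * (r ^ 2) ^ 3 - 11998349 / 109207828800 * (r ^ 2) ^ 4
      + 1 / 1587600 * (r ^ 2) ^ 5 + 137791 / 1638117432000 * (r ^ 2) ^ 6
      - 37 / 4333644000 * (r ^ 2) ^ 7 := by
    have h4 : (r ^ 2) ^ 4 ≤ (5 / 2 : ℝ) ^ 4 := pow_le_pow_left₀ hu h2 4
    have h7 : (r ^ 2) ^ 7 ≤ (5 / 2 : ℝ) ^ 7 := pow_le_pow_left₀ hu h2 7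
    have p2 : 0 ≤ (r ^ 2) ^ 2 := pow_nonneg hu 2
    have p3 : 0 ≤ (r ^ 2) ^ 3 := pow_nonneg hu 3
    have p5 : 0 ≤ (r ^ 2) ^ 5 := pow_nonneg hu 5
    have p6 : 0 ≤ (r ^ 2) ^ 6 := pow_nonneg hu 6
    nlinarith
  have h4 : 0 ≤ r ^ 4 := by positivity
  have hiden : (2 * r - 4 * r ^ 3 / 21 + 24 * r ^ 5 / 315 + 8 * r ^ 7 / 945
        + 740 * r ^ 9 / 429925) * (r - r ^ 3 / 6 + r ^ 5 / 120 - r ^ 7 / 5040)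
      - 2 * Fpre r * (1 - r ^ 2 / 2 + r ^ 4 / 24 - r ^ 6 / 720 + r ^ 8 / 40320)
      = r ^ 4 * (4 / 7 - 2 / 63 * r ^ 2 + 1 / 90 * (r ^ 2) ^ 2
        + 49895401 / 109207828800 * (r ^ 2) ^ 3 - 11998349 / 109207828800 * (r ^ 2) ^ 4
        + 1 / 1587600 * (r ^ 2) ^ 5 + 137791 / 1638117432000 * (r ^ 2) ^ 6
        - 37 / 4333644000 * (r ^ 2) ^ 7) := by
    simp only [Fpre]; ring
  nlinarith [mul_nonneg h4 hQ]

/-- Key polynomial inequality 2: `Fpre r ≥ (r - r³/6 + r⁵/120)²`. -/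
lemma aux_key2 (r : ℝ) (h2 : r ^ 2 ≤ 5 / 2) :
    (r - r ^ 3 / 6 + r ^ 5 / 120) ^ 2 ≤ Fpre r := by
  have hu : 0 ≤ r ^ 2 := sq_nonneg r
  have hQ : 0 ≤ 2 / 7 - 2 / 63 * r ^ 2 + 29 / 7560 * (r ^ 2) ^ 2
      + 25427 / 247636800 * (r ^ 2) ^ 3 := by
    have p2 : 0 ≤ (r ^ 2) ^ 2 := pow_nonneg hu 2
    have p3 : 0 ≤ (r ^ 2) ^ 3 := pow_nonneg hu 3
    nlinarith
  have h4 : 0 ≤ r ^ 4 := by positivity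
  have hiden : Fpre r - (r - r ^ 3 / 6 + r ^ 5 / 120) ^ 2
      = r ^ 4 * (2 / 7 - 2 / 63 * r ^ 2 + 29 / 7560 * (r ^ 2) ^ 2
        + 25427 / 247636800 * (r ^ 2) ^ 3) := by
    simp only [Fpre]; ring
  nlinarith [mul_nonneg h4 hQ]

/-- On `[0, π/2]` we have `sin² r ≤ Fpre r`. -/
lemma aux_sinsq_le_Fpre (r : ℝ) (h0 : 0 ≤ r) (h1 : r ≤ π / 2) :
    Real.sin r ^ 2 ≤ Fpre r := by
  have h2 : r ^ 2 ≤ 5 / 2 := by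
    have := aux_pi_half_sq
    nlinarith [Real.pi_pos]
  have hs : Real.sin r ≤ r - r ^ 3 / 6 + r ^ 5 / 120 := aux_sin_le_2 r h0
  have hsnn : 0 ≤ Real.sin r := Real.sin_nonneg_of_nonneg_of_le_pi h0
    (by linarith [Real.pi_pos])
  have : Real.sin r ^ 2 ≤ (r - r ^ 3 / 6 + r ^ 5 / 120) ^ 2 := by nlinarith
  linarith [aux_key2 r h2]

lemma aux_Cc_pos : (1 : ℝ) ≤ Cc := by
  have h0 : (0:ℝ) ≤ π / 2 := by positivity
  have := aux_sinsq_le_Fpre (π / 2) h0 le_rfl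
  rwa [Real.sin_pi_div_two, one_pow] at this

/-- `HasDerivAt` for `Fpre`. -/
lemma aux_Fpre_hasDeriv (r : ℝ) : HasDerivAt Fpre
    (2 * r - 4 * r ^ 3 / 21 + 24 * r ^ 5 / 315 + 8 * r ^ 7 / 945 + 740 * r ^ 9 / 429925) r := by
  have h := ((((hasDerivAt_pow 2 r).sub ((hasDerivAt_pow 4 r).div_const 21)).add
      (((hasDerivAt_pow 6 r).const_mul (4:ℝ)).div_const 315)).add
      ((hasDerivAt_pow 8 r).div_const 945)).add
      (((hasDerivAt_pow 10 r).const_mul (74:ℝ)).div_const 429925)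
  refine h.congr_deriv ?_
  ring

lemma aux_Fpre'_nonneg (r : ℝ) (h0 : 0 ≤ r) (h2 : r ^ 2 ≤ 5 / 2) :
    0 ≤ 2 * r - 4 * r ^ 3 / 21 + 24 * r ^ 5 / 315 + 8 * r ^ 7 / 945 + 740 * r ^ 9 / 429925 := by
  have h5 : 0 ≤ r ^ 5 := by positivity
  have h7 : 0 ≤ r ^ 7 := by positivity
  have h9 : 0 ≤ r ^ 9 := by positivity
  nlinarith [mul_nonneg h0 (sq_nonneg r)]

lemma aux_Fpre_nonneg (r : ℝ) (h0 : 0 ≤ r) (h2 : r ^ 2 ≤ 5 / 2) : 0 ≤ Fpre r := by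
  simp only [Fpre]
  have h6 : 0 ≤ r ^ 6 := by positivity
  have h8 : 0 ≤ r ^ 8 := by positivity
  have h10 : 0 ≤ r ^ 10 := by positivity
  nlinarith [sq_nonneg r, sq_nonneg (r^2)]

/-- The crucial inequality: `Fpre' r · sin r − 2 · Fpre r · cos r ≥ 0` on `(0, π/2)`. -/
lemma aux_numer_nonneg (r : ℝ) (h0 : 0 ≤ r) (h1 : r ≤ π / 2) :
    2 * Fpre r * Real.cos r ≤
      (2 * r - 4 * r ^ 3 / 21 + 24 * r ^ 5 / 315 + 8 * r ^ 7 / 945 + 740 * r ^ 9 / 429925) *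
        Real.sin r := by
  have h2 : r ^ 2 ≤ 5 / 2 := by
    have := aux_pi_half_sq; nlinarith [Real.pi_pos]
  have hF' := aux_Fpre'_nonneg r h0 h2
  have hF := aux_Fpre_nonneg r h0 h2
  have hs := aux_sin_ge_3 r h0
  have hc := aux_cos_le_3 r h0
  have key := aux_key1 r h0 h2
  nlinarith [mul_le_mul_of_nonneg_left hs hF',
    mul_le_mul_of_nonneg_left hc (by linarith : (0:ℝ) ≤ 2 * Fpre r)]

/-- For all `r ∈ (0, π/2]`: `1/C ≤ F(r)/sin²r ≤ 1`, and `F/sin²r` is monotone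
nondecreasing on `(0, π/2]`. -/
theorem stmt9 :
    (∀ r ∈ Set.Ioc 0 (π / 2), 1 / Cc ≤ Ff r / Real.sin r ^ 2 ∧ Ff r / Real.sin r ^ 2 ≤ 1) ∧
    MonotoneOn (fun r => Ff r / Real.sin r ^ 2) (Set.Ioc 0 (π / 2)) := by
  have hCc : (1:ℝ) ≤ Cc := aux_Cc_pos
  have hCc0 : (0:ℝ) < Cc := by linarith
  have hπ : (0:ℝ) < π := Real.pi_pos
  have hsinpos : ∀ r ∈ Set.Ioc (0:ℝ) (π / 2), 0 < Real.sin r := by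
    intro r hr
    exact Real.sin_pos_of_pos_of_lt_pi hr.1 (by linarith [hr.2])
  -- Monotonicity
  have hmono : MonotoneOn (fun r => Ff r / Real.sin r ^ 2) (Set.Ioc 0 (π / 2)) := by
    apply monotoneOn_of_deriv_nonneg (convex_Ioc 0 (π / 2))
    · apply ContinuousOn.div
      · have : Continuous Ff := by
          unfold Ff Fpre
          fun_prop
        exact this.continuousOn
      · exact (Real.continuous_sin.pow 2).continuousOn
      · intro r hr
        exact pow_ne_zero 2 (ne_of_gt (hsinpos r hr))
    · intro r hr
      rw [interior_Ioc] at hr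
      have hs := hsinpos r ⟨hr.1, le_of_lt hr.2⟩
      have hd : HasDerivAt (fun r => Ff r / Real.sin r ^ 2) _ r :=
        ((aux_Fpre_hasDeriv r).div_const Cc).div ((Real.hasDerivAt_sin r).pow 2)
          (pow_ne_zero 2 (ne_of_gt hs))
      exact hd.differentiableAt.differentiableWithinAt
    · intro r hr
      rw [interior_Ioc] at hr
      have hs := hsinpos r ⟨hr.1, le_of_lt hr.2⟩
      have hd : HasDerivAt (fun r => Ff r / Real.sin r ^ 2)
          (((2 * r - 4 * r ^ 3 / 21 + 24 * r ^ 5 / 315 + 8 * r ^ 7 / 945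
              + 740 * r ^ 9 / 429925) / Cc * Real.sin r ^ 2
            - Fpre r / Cc * (2 * Real.sin r ^ 1 * Real.cos r)) / (Real.sin r ^ 2) ^ 2) r := by
        have := ((aux_Fpre_hasDeriv r).div_const Cc).div ((Real.hasDerivAt_sin r).pow 2)
          (pow_ne_zero 2 (ne_of_gt hs))
        refine this.congr_deriv ?_
        simp
      rw [hd.deriv]
      have hnum := aux_numer_nonneg r (le_of_lt hr.1) (le_of_lt hr.2)
      have key : 0 ≤ (2 * r - 4 * r ^ 3 / 21 + 24 * r ^ 5 / 315 + 8 * r ^ 7 / 945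
          + 740 * r ^ 9 / 429925) * Real.sin r - 2 * Fpre r * Real.cos r := by linarith
      have hfac : 0 ≤ Real.sin r * ((2 * r - 4 * r ^ 3 / 21 + 24 * r ^ 5 / 315 + 8 * r ^ 7 / 945
          + 740 * r ^ 9 / 429925) * Real.sin r - 2 * Fpre r * Real.cos r) :=
        mul_nonneg (le_of_lt hs) key
      apply div_nonneg _ (by positivity)
      have : (2 * r - 4 * r ^ 3 / 21 + 24 * r ^ 5 / 315 + 8 * r ^ 7 / 945
          + 740 * r ^ 9 / 429925) / Cc * Real.sin r ^ 2
          - Fpre r / Cc * (2 * Real.sin r ^ 1 * Real.cos r)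
          = (Real.sin r * ((2 * r - 4 * r ^ 3 / 21 + 24 * r ^ 5 / 315 + 8 * r ^ 7 / 945
            + 740 * r ^ 9 / 429925) * Real.sin r - 2 * Fpre r * Real.cos r)) / Cc := by
        field_simp
      rw [this]
      exact div_nonneg hfac (le_of_lt hCc0)
  refine ⟨?_, hmono⟩
  intro r hr
  have hs := hsinpos r hr
  have hs2 : (0:ℝ) < Real.sin r ^ 2 := by positivity
  constructor
  · -- lower bound
    rw [Ff, div_div, div_le_div_iff₀ hCc0 (by positivity)]
    have := aux_sinsq_le_Fpre r (le_of_lt hr.1) hr.2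
    nlinarith
  · -- upper bound
    have hmem : (π / 2) ∈ Set.Ioc (0:ℝ) (π / 2) := ⟨by positivity, le_rfl⟩
    have := hmono hr hmem hr.2
    simp only at this
    have hend : Ff (π / 2) / Real.sin (π / 2) ^ 2 = 1 := by
      rw [Real.sin_pi_div_two, one_pow, div_one, Ff, Cc, div_self (by positivity : Fpre (π/2) ≠ 0)]
    · linarith [hend ▸ this]
end

section
/- Let n ≥ 2, k ≥ 1 an integer, and c a real number. The function v(s) = (nc / (2(2k-1)(n+2k))) · Σ_{j=0}^{k} a_j sin^{2j}s, where a_k = 1 and a_j = (2(j+1)/(2j-1)) a_{j+1} for 0 ≤ j < k, satisfies the ODE v'' + (n-1) cot s · v' + n v = -(nc/2) sin^{2k}s on (0, π). -/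
open Real

/-- Let `n ≥ 2`, `k ≥ 1`, `c ∈ ℝ`, and let `a : ℕ → ℝ` satisfy `a k = 1` and
`a j = (2(j+1)/(2j-1)) a (j+1)` for `j < k`. Then
`v(s) = (nc/(2(2k-1)(n+2k))) Σ_{j=0}^k a_j sin^{2j}s` satisfies
`v'' + (n-1) cot s · v' + n v = -(nc/2) sin^{2k}s` on `(0, π)`. -/
theorem stmt15 (n k : ℕ) (hn : 2 ≤ n) (hk : 1 ≤ k) (c : ℝ)
    (a : ℕ → ℝ) (hak : a k = 1)
    (harec : ∀ j, j < k → a j = (2 * ((j : ℝ) + 1) / (2 * j - 1)) * a (j + 1))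
    (v : ℝ → ℝ)
    (hv : v = fun s => (n * c / (2 * (2 * (k : ℝ) - 1) * (n + 2 * k))) *
      ∑ j ∈ Finset.range (k + 1), a j * Real.sin s ^ (2 * j))
    (s : ℝ) (hs : 0 < s) (hs' : s < π) :
    deriv (deriv v) s + ((n : ℝ) - 1) * (Real.cos s / Real.sin s) * deriv v s + n * v s
      = -((n : ℝ) * c / 2) * Real.sin s ^ (2 * k) := by
  have hsin : Real.sin s ≠ 0 := ne_of_gt (Real.sin_pos_of_pos_of_lt_pi hs hs')
  set K : ℝ := (n : ℝ) * c / (2 * (2 * (k : ℝ) - 1) * ((n : ℝ) + 2 * (k : ℝ))) with hKdef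
  have hd1 : ∀ t : ℝ, HasDerivAt v
      (K * ∑ j ∈ Finset.range (k + 1),
        a j * (((2 * j : ℕ) : ℝ) * Real.sin t ^ (2 * j - 1) * Real.cos t)) t := by
    intro t
    rw [hv]
    have hsum : HasDerivAt
        (fun t => ∑ j ∈ Finset.range (k + 1), a j * Real.sin t ^ (2 * j))
        (∑ j ∈ Finset.range (k + 1),
          a j * (((2 * j : ℕ) : ℝ) * Real.sin t ^ (2 * j - 1) * Real.cos t)) t :=
      HasDerivAt.fun_sum fun j _ => ((Real.hasDerivAt_sin t).pow (2 * j)).const_mul (a j)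
    exact hsum.const_mul K
  have hderiv1 : deriv v = fun t => K * ∑ j ∈ Finset.range (k + 1),
      a j * (((2 * j : ℕ) : ℝ) * Real.sin t ^ (2 * j - 1) * Real.cos t) :=
    funext fun t => (hd1 t).deriv
  have hd2 : HasDerivAt (deriv v)
      (K * ∑ j ∈ Finset.range (k + 1),
        (a j * ((2 * j : ℕ) : ℝ)) *
          ((((2 * j - 1 : ℕ) : ℝ) * Real.sin s ^ (2 * j - 1 - 1) * Real.cos s) * Real.cos s
            + Real.sin s ^ (2 * j - 1) * (-Real.sin s))) s := by
    rw [hderiv1]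
    refine HasDerivAt.const_mul K (HasDerivAt.fun_sum fun j _ => ?_)
    have h1 : HasDerivAt (fun t => Real.sin t ^ (2 * j - 1) * Real.cos t)
        ((((2 * j - 1 : ℕ) : ℝ) * Real.sin s ^ (2 * j - 1 - 1) * Real.cos s) * Real.cos s
          + Real.sin s ^ (2 * j - 1) * (-Real.sin s)) s :=
      ((Real.hasDerivAt_sin s).pow _).mul (Real.hasDerivAt_cos s)
    have hfe : (fun t => a j * (((2 * j : ℕ) : ℝ) * Real.sin t ^ (2 * j - 1) * Real.cos t))
        = fun t => (a j * ((2 * j : ℕ) : ℝ)) * (Real.sin t ^ (2 * j - 1) * Real.cos t) := by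
      funext t; ring
    rw [hfe]
    exact h1.const_mul _
  rw [hd2.deriv, (hd1 s).deriv]
  simp only [hv]
  -- key telescoping identity
  have key : ∀ m, m ≤ k →
      (∑ j ∈ Finset.range (m + 1),
        ((a j * ((2 * j : ℕ) : ℝ)) *
            ((((2 * j - 1 : ℕ) : ℝ) * Real.sin s ^ (2 * j - 1 - 1) * Real.cos s) * Real.cos s
              + Real.sin s ^ (2 * j - 1) * (-Real.sin s))
          + ((n : ℝ) - 1) * (Real.cos s / Real.sin s) *
              (a j * (((2 * j : ℕ) : ℝ) * Real.sin s ^ (2 * j - 1) * Real.cos s))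
          + (n : ℝ) * (a j * Real.sin s ^ (2 * j))))
      = a m * ((1 - 2 * (m : ℝ)) * ((n : ℝ) + 2 * (m : ℝ))) * Real.sin s ^ (2 * m) := by
    intro m
    induction m with
    | zero => intro _; norm_num; ring
    | succ m ih =>
      intro hmk
      rw [Finset.sum_range_succ, ih (by omega)]
      have e1 : 2 * (m + 1) - 1 = 2 * m + 1 := by omega
      have e2 : 2 * m + 1 - 1 = 2 * m := by omega
      have e3 : 2 * (m + 1) = 2 * m + 2 := by omega
      rw [e1, e2, e3, harec m (by omega)]
      have hC : Real.cos s ^ 2 = 1 - Real.sin s ^ 2 := Real.cos_sq' s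
      have h2m1 : 2 * (m : ℝ) - 1 ≠ 0 := by
        have h : (2 * m : ℕ) ≠ 1 := by omega
        have h' : (2 * (m : ℝ)) ≠ 1 := by exact_mod_cast h
        exact sub_ne_zero.mpr h'
      push_cast
      ring_nf
      rw [Real.cos_sq' s]
      have h2m1' : (-1 + (m : ℝ) * 2) ≠ 0 := by
        intro h; apply h2m1; linarith
      field_simp [h2m1']
      ring
  have hkey := key k le_rfl
  rw [hak] at hkey
  have hcomb : (∑ j ∈ Finset.range (k + 1),
        ((a j * ((2 * j : ℕ) : ℝ)) *
            ((((2 * j - 1 : ℕ) : ℝ) * Real.sin s ^ (2 * j - 1 - 1) * Real.cos s) * Real.cos s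
              + Real.sin s ^ (2 * j - 1) * (-Real.sin s))
          + ((n : ℝ) - 1) * (Real.cos s / Real.sin s) *
              (a j * (((2 * j : ℕ) : ℝ) * Real.sin s ^ (2 * j - 1) * Real.cos s))
          + (n : ℝ) * (a j * Real.sin s ^ (2 * j))))
      = (∑ j ∈ Finset.range (k + 1),
          (a j * ((2 * j : ℕ) : ℝ)) *
            ((((2 * j - 1 : ℕ) : ℝ) * Real.sin s ^ (2 * j - 1 - 1) * Real.cos s) * Real.cos s
              + Real.sin s ^ (2 * j - 1) * (-Real.sin s)))
        + ((n : ℝ) - 1) * (Real.cos s / Real.sin s) *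
            (∑ j ∈ Finset.range (k + 1),
              a j * (((2 * j : ℕ) : ℝ) * Real.sin s ^ (2 * j - 1) * Real.cos s))
        + (n : ℝ) * (∑ j ∈ Finset.range (k + 1), a j * Real.sin s ^ (2 * j)) := by
    rw [Finset.sum_add_distrib, Finset.sum_add_distrib, ← Finset.mul_sum, ← Finset.mul_sum]
  rw [hcomb] at hkey
  have h2k1 : 2 * (k : ℝ) - 1 ≠ 0 := by
    have h : (2 * k : ℕ) ≠ 1 := by omega
    have h' : (2 * (k : ℝ)) ≠ 1 := by exact_mod_cast h
    exact sub_ne_zero.mpr h'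
  have hnk : (n : ℝ) + 2 * (k : ℝ) ≠ 0 := by positivity
  have hKval : K * ((1 - 2 * (k : ℝ)) * ((n : ℝ) + 2 * (k : ℝ))) = -((n : ℝ) * c / 2) := by
    have hden : (2 * (2 * (k : ℝ) - 1) * ((n : ℝ) + 2 * (k : ℝ))) ≠ 0 :=
      mul_ne_zero (mul_ne_zero two_ne_zero h2k1) hnk
    rw [hKdef, div_mul_eq_mul_div, div_eq_iff hden]; ring
  linear_combination K * hkey + Real.sin s ^ (2 * k) * hKval
end

section
/- Let n ≥ 2, k ≥ 1, c real, and let v be the explicit solution v(s) = (nc/(2(2k-1)(n+2k))) Σ_{j=0}^k a_j sin^{2j}s with a_k = 1 and a_j = (2(j+1)/(2j-1)) a_{j+1}. Then cot s · v'(s) - v''(s) = (nkc/(n+2k)) sin^{2k}s for all s ∈ (0, π). -/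
open Real

private lemma two_mul_sub_one_ne (i : ℕ) : (2 * (i : ℝ) - 1) ≠ 0 := by
  rcases i with _ | m
  · norm_num
  · push_cast; intro h; nlinarith

/-- Let `n ≥ 2`, `k ≥ 1`, `c ∈ ℝ`, and let `a : ℕ → ℝ` satisfy `a k = 1` and
`a j = (2(j+1)/(2j-1)) a (j+1)` for `j < k`. Then
the explicit solution
`v(s) = (nc/(2(2k-1)(n+2k))) Σ_{j=0}^k a_j sin^{2j}s` satisfies
`cot s · v'(s) - v''(s) = (nkc/(n+2k)) sin^{2k}s` for all `s ∈ (0, π)`. -/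
theorem stmt16 (n k : ℕ) (hn : 2 ≤ n) (hk : 1 ≤ k) (c : ℝ)
    (a : ℕ → ℝ) (hak : a k = 1)
    (harec : ∀ j, j < k → a j = (2 * ((j : ℝ) + 1) / (2 * j - 1)) * a (j + 1))
    (v : ℝ → ℝ)
    (hv : v = fun s => (n * c / (2 * (2 * (k : ℝ) - 1) * (n + 2 * k))) *
      ∑ j ∈ Finset.range (k + 1), a j * Real.sin s ^ (2 * j))
    (s : ℝ) (hs : 0 < s) (hs' : s < π) :
    (Real.cos s / Real.sin s) * deriv v s - deriv (deriv v) s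
      = ((n : ℝ) * k * c / (n + 2 * k)) * Real.sin s ^ (2 * k) := by
  have hS : Real.sin s ≠ 0 := ne_of_gt (Real.sin_pos_of_pos_of_lt_pi hs hs')
  set C : ℝ := (n : ℝ) * c / (2 * (2 * (k : ℝ) - 1) * (n + 2 * k)) with hC
  -- first derivative
  have hd1 : ∀ x : ℝ, HasDerivAt v
      (C * ∑ j ∈ Finset.range (k+1),
        a j * (((2*j : ℕ) : ℝ) * Real.sin x ^ (2*j - 1) * Real.cos x)) x := by
    intro x
    rw [hv]
    exact HasDerivAt.const_mul C (HasDerivAt.fun_sum fun j _ =>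
      ((Real.hasDerivAt_sin x).pow (2*j)).const_mul (a j))
  have hdv : deriv v = fun x => C * ∑ j ∈ Finset.range (k+1),
      a j * (((2*j : ℕ) : ℝ) * (Real.sin x ^ (2*j - 1) * Real.cos x)) := by
    funext x
    rw [(hd1 x).deriv]
    congr 1
    exact Finset.sum_congr rfl fun j _ => by ring
  -- second derivative
  have hd2 : HasDerivAt (deriv v)
      (C * ∑ j ∈ Finset.range (k+1),
        a j * (((2*j : ℕ) : ℝ) * (((2*j - 1 : ℕ) : ℝ) * Real.sin s ^ (2*j - 1 - 1) *
          Real.cos s * Real.cos s + Real.sin s ^ (2*j - 1) * (-Real.sin s)))) s := by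
    rw [hdv]
    exact HasDerivAt.const_mul C (HasDerivAt.fun_sum fun j _ =>
      ((((Real.hasDerivAt_sin s).pow (2*j - 1)).mul (Real.hasDerivAt_cos s)).const_mul
        (((2*j : ℕ) : ℝ))).const_mul (a j))
  rw [hd2.deriv, hdv]
  -- telescoping function
  set F : ℕ → ℝ := fun i => 2*(i:ℝ)*(2*(i:ℝ)-1) * a i * Real.sin s ^ (2*i) with hF
  have hcos : Real.cos s ^ 2 = 1 - Real.sin s ^ 2 := Real.cos_sq' s
  have hterm : ∀ j ∈ Finset.range (k+1),
      Real.cos s / Real.sin s * (a j * (((2*j : ℕ) : ℝ) * (Real.sin s ^ (2*j - 1) * Real.cos s)))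
      - a j * (((2*j : ℕ) : ℝ) * (((2*j - 1 : ℕ) : ℝ) * Real.sin s ^ (2*j - 1 - 1) *
          Real.cos s * Real.cos s + Real.sin s ^ (2*j - 1) * (-Real.sin s)))
      = F j - F (j - 1) := by
    intro j hj
    rcases j with _ | i
    · simp [hF]
    · have hik : i < k := by
        have := Finset.mem_range.mp hj; omega
      have hrec := harec i hik
      have hne : (2*(i:ℝ) - 1) ≠ 0 := two_mul_sub_one_ne i
      have e1 : 2*(i+1) - 1 = 2*i + 1 := by omega
      have e2 : 2*(i+1) - 1 - 1 = 2*i := by omega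
      have e3 : i + 1 - 1 = i := by omega
      rw [e2, e1, e3]
      simp only [hF, hrec]
      have hpow : Real.sin s ^ (2*i + 1) = Real.sin s ^ (2*i) * Real.sin s := pow_succ _ _
      have hpow2 : Real.sin s ^ (2*(i+1)) = Real.sin s ^ (2*i) * Real.sin s ^ 2 := by
        rw [← pow_add]; ring_nf
      rw [hpow, hpow2]
      have hc2 : Real.cos s * Real.cos s = 1 - Real.sin s ^ 2 := by
        rw [← hcos]; ring
      push_cast
      field_simp
      linear_combination (-(2:ℝ) * (i:ℝ) * a (i+1)) * hc2
  have hsum : Real.cos s / Real.sin s *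
      (C * ∑ j ∈ Finset.range (k+1),
        a j * (((2*j : ℕ) : ℝ) * (Real.sin s ^ (2*j - 1) * Real.cos s)))
      - C * ∑ j ∈ Finset.range (k+1),
        a j * (((2*j : ℕ) : ℝ) * (((2*j - 1 : ℕ) : ℝ) * Real.sin s ^ (2*j - 1 - 1) *
          Real.cos s * Real.cos s + Real.sin s ^ (2*j - 1) * (-Real.sin s)))
      = C * (F k - F 0) := by
    have : Real.cos s / Real.sin s *
        (C * ∑ j ∈ Finset.range (k+1),
          a j * (((2*j : ℕ) : ℝ) * (Real.sin s ^ (2*j - 1) * Real.cos s)))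
        - C * ∑ j ∈ Finset.range (k+1),
          a j * (((2*j : ℕ) : ℝ) * (((2*j - 1 : ℕ) : ℝ) * Real.sin s ^ (2*j - 1 - 1) *
            Real.cos s * Real.cos s + Real.sin s ^ (2*j - 1) * (-Real.sin s)))
        = C * ∑ j ∈ Finset.range (k+1),
          (Real.cos s / Real.sin s * (a j * (((2*j : ℕ) : ℝ) * (Real.sin s ^ (2*j - 1) * Real.cos s)))
          - a j * (((2*j : ℕ) : ℝ) * (((2*j - 1 : ℕ) : ℝ) * Real.sin s ^ (2*j - 1 - 1) *
            Real.cos s * Real.cos s + Real.sin s ^ (2*j - 1) * (-Real.sin s)))) := by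
      rw [Finset.sum_sub_distrib, ← Finset.mul_sum]
      ring
    rw [this, Finset.sum_congr rfl hterm]
    congr 1
    rw [Finset.sum_range_succ']
    simp only [Nat.add_sub_cancel, Nat.zero_sub, sub_self, add_zero]
    exact Finset.sum_range_sub F k
  rw [hsum]
  simp only [hF, hak, Nat.cast_zero]
  have hk1 : (2*(k:ℝ) - 1) ≠ 0 := two_mul_sub_one_ne k
  have hnk : ((n:ℝ) + 2*k) ≠ 0 := by positivity
  rw [hC]
  field_simp
  ring
end
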